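/- Let U ⊆ (0,∞) be an open set, let φ(s) = 2s^{2/3}/(1+2s) and ψ(s) = -4s^{1/3}/(1+2s), and suppose the derivative φ'(s) ≠ 0 for every s ∈ U. Let H : ℝ → ℝ be six times differentiable on an open set V ⊆ ℝ containing φ(U), and suppose H(φ(s)) = ψ(s) for all s ∈ U. Then H satisfies Noth's equation at every point of φ(U): for all t ∈ φ(U), 10·(H''(t))³·H⁽⁶⁾(t) − 70·(H''(t))²·H⁽³⁾(t)·H⁽⁵⁾(t) − 49·(H''(t))²·(H⁽⁴⁾(t))² + 280·H''(t)·(H⁽³⁾(t))²·H⁽⁴⁾(t) − 175·(H⁽³⁾(t))⁴ = 0. -/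

import Mathlib

set_option maxHeartbeats 1000000
lemma nothaux_rt_sq (s : ℝ) (hs : 0 ≤ s) : (s ^ ((1:ℝ)/3)) ^ 2 = s ^ ((2:ℝ)/3) := by
  rw [← Real.rpow_natCast (s ^ ((1:ℝ)/3)) 2, ← Real.rpow_mul hs]
  norm_num

lemma nothaux_rt_cube (s : ℝ) (hs : 0 ≤ s) : (s ^ ((1:ℝ)/3)) ^ 3 = s := by
  rw [← Real.rpow_natCast (s ^ ((1:ℝ)/3)) 3, ← Real.rpow_mul hs]
  norm_num

lemma nothaux_d_rt (s : ℝ) (hs : 0 < s) :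
    HasDerivAt (fun x : ℝ => x ^ ((1:ℝ)/3)) (1 / (3 * (s ^ ((1:ℝ)/3)) ^ 2)) s := by
  have h := Real.hasDerivAt_rpow_const (x := s) (p := (1:ℝ)/3) (Or.inl hs.ne')
  convert h using 1
  rw [nothaux_rt_sq s hs.le, show (1:ℝ)/3 - 1 = -(2/3) by norm_num, Real.rpow_neg hs.le]
  ring

lemma nothaux_keystep (U : Set ℝ) (hU : IsOpen U)
    (φ H Φ : ℝ → ℝ) (N D N' D' M E : ℝ → ℝ) (k : ℕ)
    (hrt : ∀ s ∈ U, HasDerivAt (fun x : ℝ => x ^ ((1:ℝ)/3)) (1 / (3 * (s ^ ((1:ℝ)/3)) ^ 2)) s)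
    (hφd : ∀ s ∈ U, HasDerivAt φ (Φ s) s)
    (hΦ : ∀ s ∈ U, Φ s ≠ 0)
    (hdiff : ∀ s ∈ U, DifferentiableAt ℝ (iteratedDeriv k H) (φ s))
    (hk : ∀ s ∈ U, iteratedDeriv k H (φ s) = N (s ^ ((1:ℝ)/3)) / D (s ^ ((1:ℝ)/3)))
    (hdN : ∀ c : ℝ, HasDerivAt N (N' c) c)
    (hdD : ∀ c : ℝ, HasDerivAt D (D' c) c)
    (hDne : ∀ s ∈ U, D (s ^ ((1:ℝ)/3)) ≠ 0)
    (hquot : ∀ s ∈ U,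
      (N' (s ^ ((1:ℝ)/3)) * D (s ^ ((1:ℝ)/3)) - N (s ^ ((1:ℝ)/3)) * D' (s ^ ((1:ℝ)/3)))
          / D (s ^ ((1:ℝ)/3)) ^ 2 * (1 / (3 * (s ^ ((1:ℝ)/3)) ^ 2)) / Φ s
        = M (s ^ ((1:ℝ)/3)) / E (s ^ ((1:ℝ)/3))) :
    ∀ s ∈ U, iteratedDeriv (k+1) H (φ s) = M (s ^ ((1:ℝ)/3)) / E (s ^ ((1:ℝ)/3)) := by
  intro s hs
  have hq : HasDerivAt (fun y : ℝ => N y / D y)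
      ((N' (s ^ ((1:ℝ)/3)) * D (s ^ ((1:ℝ)/3)) - N (s ^ ((1:ℝ)/3)) * D' (s ^ ((1:ℝ)/3)))
        / D (s ^ ((1:ℝ)/3)) ^ 2) (s ^ ((1:ℝ)/3)) :=
    (hdN _).div (hdD _) (hDne s hs)
  have hcomp : HasDerivAt (fun x : ℝ => N (x ^ ((1:ℝ)/3)) / D (x ^ ((1:ℝ)/3)))
      ((N' (s ^ ((1:ℝ)/3)) * D (s ^ ((1:ℝ)/3)) - N (s ^ ((1:ℝ)/3)) * D' (s ^ ((1:ℝ)/3)))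
        / D (s ^ ((1:ℝ)/3)) ^ 2 * (1 / (3 * (s ^ ((1:ℝ)/3)) ^ 2))) s := by
    have h := hq.comp s (hrt s hs)
    simpa [Function.comp_def] using h
  have hfun : (iteratedDeriv k H ∘ φ) =ᶠ[nhds s]
      (fun x : ℝ => N (x ^ ((1:ℝ)/3)) / D (x ^ ((1:ℝ)/3))) := by
    filter_upwards [hU.mem_nhds hs] with x hx using hk x hx
  have hHd : HasDerivAt (iteratedDeriv k H ∘ φ)
      (deriv (iteratedDeriv k H) (φ s) * Φ s) s :=
    ((hdiff s hs).hasDerivAt).comp s (hφd s hs)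
  have h2 := hHd.congr_of_eventuallyEq hfun.symm
  have huniq := h2.unique hcomp
  rw [iteratedDeriv_succ, show deriv (iteratedDeriv k H) (φ s)
      = deriv (iteratedDeriv k H) (φ s) * Φ s / Φ s from
      (mul_div_cancel_right₀ _ (hΦ s hs)).symm, huniq, hquot s hs]
/-- Noth's equation at a point `t` for a function `H`, expressed via iterated derivatives. -/
def NothEqAt (H : ℝ → ℝ) (t : ℝ) : Prop :=
  10 * (iteratedDeriv 2 H t) ^ 3 * iteratedDeriv 6 H t
    - 70 * (iteratedDeriv 2 H t) ^ 2 * iteratedDeriv 3 H t * iteratedDeriv 5 H t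
    - 49 * (iteratedDeriv 2 H t) ^ 2 * (iteratedDeriv 4 H t) ^ 2
    + 280 * iteratedDeriv 2 H t * (iteratedDeriv 3 H t) ^ 2 * iteratedDeriv 4 H t
    - 175 * (iteratedDeriv 3 H t) ^ 4 = 0

/-- The parametrization `(t,H) = (2 s^(2/3)/(1+2s), -4 s^(1/3)/(1+2s))` yields a solution of
Noth's equation. -/
theorem noth_parametrization_two
    (U V : Set ℝ) (hU : IsOpen U) (hUpos : U ⊆ Set.Ioi (0 : ℝ)) (hV : IsOpen V)
    (φ ψ H : ℝ → ℝ)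
    (hφ : ∀ s : ℝ, φ s = 2 * s ^ ((2 : ℝ) / 3) / (1 + 2 * s))
    (hψ : ∀ s : ℝ, ψ s = -(4 * s ^ ((1 : ℝ) / 3)) / (1 + 2 * s))
    (hφ' : ∀ s ∈ U, deriv φ s ≠ 0)
    (hVU : φ '' U ⊆ V)
    (hdiff : ∀ k < 6, ∀ t ∈ V, DifferentiableAt ℝ (iteratedDeriv k H) t)
    (hpar : ∀ s ∈ U, H (φ s) = ψ s) :
    ∀ t ∈ φ '' U, NothEqAt H t := by
  have hrtU : ∀ s ∈ U, HasDerivAt (fun x : ℝ => x ^ ((1:ℝ)/3))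
      (1 / (3 * (s ^ ((1:ℝ)/3)) ^ 2)) s := fun s hs => nothaux_d_rt s (hUpos hs)
  have hφd : ∀ s ∈ U, HasDerivAt φ ((4 - 4 * (s ^ ((1:ℝ)/3)) ^ 3) / (3 * (s ^ ((1:ℝ)/3)) * (1 + 2 * (s ^ ((1:ℝ)/3)) ^ 3) ^ 2)) s := by
    intro s hs
    have hs0 : (0:ℝ) < s := hUpos hs
    have hc0 : 0 < s ^ ((1:ℝ)/3) := Real.rpow_pos_of_pos hs0 _
    have hc3 : 0 < (s ^ ((1:ℝ)/3)) ^ 3 := pow_pos hc0 3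
    have hd0 : (0:ℝ) < 1 + 2 * (s ^ ((1:ℝ)/3)) ^ 3 := by linarith
    have hN := (hasDerivAt_pow 2 (s ^ ((1:ℝ)/3))).const_mul ((2) : ℝ)
    have hD := (hasDerivAt_const (s ^ ((1:ℝ)/3)) ((1) : ℝ)).add ((hasDerivAt_pow 3 (s ^ ((1:ℝ)/3))).const_mul ((2) : ℝ))
    have h2 := (hN.div hD hd0.ne').comp s (hrtU s hs)
    have hev : φ =ᶠ[nhds s] ((fun y : ℝ => (2) * y ^ 2 / ((1) + (2) * y ^ 3)) ∘ fun x : ℝ => x ^ ((1:ℝ)/3)) := by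
      filter_upwards [isOpen_Ioi.mem_nhds (hUpos hs)] with x hx
      simp only [Function.comp]
      rw [hφ x, nothaux_rt_sq x (le_of_lt hx), nothaux_rt_cube x (le_of_lt hx)]
    have h3 := h2.congr_of_eventuallyEq hev
    refine h3.congr_deriv ?_
    simp only [Pi.add_apply]
    push_cast
    field_simp
    ring
  have hΦne : ∀ s ∈ U, ((4 - 4 * (s ^ ((1:ℝ)/3)) ^ 3) / (3 * (s ^ ((1:ℝ)/3)) * (1 + 2 * (s ^ ((1:ℝ)/3)) ^ 3) ^ 2)) ≠ 0 := by
    intro s hs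
    have hd := (hφd s hs).deriv
    rw [← hd]
    exact hφ' s hs
  have hcube : ∀ s ∈ U, (s ^ ((1:ℝ)/3)) ^ 3 - 1 ≠ 0 := by
    intro s hs h
    apply hΦne s hs
    have h1 : (s ^ ((1:ℝ)/3)) ^ 3 = 1 := by linarith
    rw [h1]
    norm_num
  have h0 : ∀ s ∈ U, iteratedDeriv 0 H (φ s) = ((-4) * (s ^ ((1:ℝ)/3))) / ((1) + (2) * (s ^ ((1:ℝ)/3)) ^ 3) := by
    intro s hs
    have hs0 : (0:ℝ) ≤ s := le_of_lt (hUpos hs)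
    rw [iteratedDeriv_zero, hpar s hs, hψ s, nothaux_rt_cube s hs0]
    ring
  have h1 : ∀ s ∈ U, iteratedDeriv 1 H (φ s) = ((1) + (-4) * (s ^ ((1:ℝ)/3)) ^ 3) / ((s ^ ((1:ℝ)/3)) * ((s ^ ((1:ℝ)/3)) ^ 3 - 1)) := by
    refine nothaux_keystep U hU φ H (fun s : ℝ => (4 - 4 * (s ^ ((1:ℝ)/3)) ^ 3) / (3 * (s ^ ((1:ℝ)/3)) * (1 + 2 * (s ^ ((1:ℝ)/3)) ^ 3) ^ 2))
      (fun x : ℝ => (-4) * x) (fun x : ℝ => (1) + (2) * x ^ 3)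
      (fun x : ℝ => (-4)) (fun x : ℝ => (6) * x ^ 2)
      (fun x : ℝ => (1) + (-4) * x ^ 3) (fun x : ℝ => x * (x ^ 3 - 1))
      0 hrtU hφd hΦne (fun s hs => hdiff 0 (by norm_num) (φ s) (hVU ⟨s, hs, rfl⟩)) h0 ?_ ?_ ?_ ?_
    · intro c
      have h := ((hasDerivAt_id' (𝕜 := ℝ) c).const_mul ((-4) : ℝ))
      refine h.congr_deriv ?_
      push_cast
      ring
    · intro c
      have h := ((hasDerivAt_const c ((1) : ℝ)).add ((hasDerivAt_pow 3 c).const_mul ((2) : ℝ)))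
      refine h.congr_deriv ?_
      push_cast
      ring
    · intro s hs
      have hc0 : 0 < s ^ ((1:ℝ)/3) := Real.rpow_pos_of_pos (hUpos hs) _
      show ((1) + (2) * (s ^ ((1:ℝ)/3)) ^ 3) ≠ 0
      have hc3 : 0 < (s ^ ((1:ℝ)/3)) ^ 3 := pow_pos hc0 3
      intro h
      exact absurd h (by positivity)
    · intro s hs
      have hc0 : 0 < s ^ ((1:ℝ)/3) := Real.rpow_pos_of_pos (hUpos hs) _
      have h1 := hcube s hs
      have hc3 : 0 < (s ^ ((1:ℝ)/3)) ^ 3 := pow_pos hc0 3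
      have hd0 : (0:ℝ) < 1 + 2 * (s ^ ((1:ℝ)/3)) ^ 3 := by linarith
      have h4 : (4:ℝ) - 4 * (s ^ ((1:ℝ)/3)) ^ 3 ≠ 0 := by intro h; exact h1 (by linarith)
      show (((-4)) * ((1) + (2) * (s ^ ((1:ℝ)/3)) ^ 3) - ((-4) * (s ^ ((1:ℝ)/3))) * ((6) * (s ^ ((1:ℝ)/3)) ^ 2))
          / ((1) + (2) * (s ^ ((1:ℝ)/3)) ^ 3) ^ 2 * (1 / (3 * (s ^ ((1:ℝ)/3)) ^ 2)) / ((4 - 4 * (s ^ ((1:ℝ)/3)) ^ 3) / (3 * (s ^ ((1:ℝ)/3)) * (1 + 2 * (s ^ ((1:ℝ)/3)) ^ 3) ^ 2))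
          = ((1) + (-4) * (s ^ ((1:ℝ)/3)) ^ 3) / ((s ^ ((1:ℝ)/3)) * ((s ^ ((1:ℝ)/3)) ^ 3 - 1))
      have hb : (s ^ ((1:ℝ)/3)) * ((s ^ ((1:ℝ)/3)) ^ 3 - 1) ≠ 0 := mul_ne_zero hc0.ne' h1
      have h1' : (1:ℝ) - (s ^ ((1:ℝ)/3)) ^ 3 ≠ 0 := by intro h; exact h1 (by linarith)
      field_simp
      ring
  have h2 : ∀ s ∈ U, iteratedDeriv 2 H (φ s) = (((-1)/4) + (-2) * (s ^ ((1:ℝ)/3)) ^ 3 + (-6) * (s ^ ((1:ℝ)/3)) ^ 6 + (-8) * (s ^ ((1:ℝ)/3)) ^ 9 + (-4) * (s ^ ((1:ℝ)/3)) ^ 12) / (((s ^ ((1:ℝ)/3)) * ((s ^ ((1:ℝ)/3)) ^ 3 - 1)) ^ 3) := by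
    refine nothaux_keystep U hU φ H (fun s : ℝ => (4 - 4 * (s ^ ((1:ℝ)/3)) ^ 3) / (3 * (s ^ ((1:ℝ)/3)) * (1 + 2 * (s ^ ((1:ℝ)/3)) ^ 3) ^ 2))
      (fun x : ℝ => (1) + (-4) * x ^ 3) (fun x : ℝ => x * (x ^ 3 - 1))
      (fun x : ℝ => (-12) * x ^ 2) (fun x : ℝ => 4 * x ^ 3 - 1)
      (fun x : ℝ => ((-1)/4) + (-2) * x ^ 3 + (-6) * x ^ 6 + (-8) * x ^ 9 + (-4) * x ^ 12) (fun x : ℝ => (x * (x ^ 3 - 1)) ^ 3)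
      1 hrtU hφd hΦne (fun s hs => hdiff 1 (by norm_num) (φ s) (hVU ⟨s, hs, rfl⟩)) h1 ?_ ?_ ?_ ?_
    · intro c
      have h := ((hasDerivAt_const c ((1) : ℝ)).add ((hasDerivAt_pow 3 c).const_mul ((-4) : ℝ)))
      refine h.congr_deriv ?_
      push_cast
      ring
    · intro c
      have h := ((hasDerivAt_id' (𝕜 := ℝ) c).mul ((hasDerivAt_pow 3 c).sub_const 1))
      refine h.congr_deriv ?_
      push_cast
      ring
    · intro s hs
      have hc0 : 0 < s ^ ((1:ℝ)/3) := Real.rpow_pos_of_pos (hUpos hs) _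
      show ((s ^ ((1:ℝ)/3)) * ((s ^ ((1:ℝ)/3)) ^ 3 - 1)) ≠ 0
      exact mul_ne_zero hc0.ne' (hcube s hs)
    · intro s hs
      have hc0 : 0 < s ^ ((1:ℝ)/3) := Real.rpow_pos_of_pos (hUpos hs) _
      have h1 := hcube s hs
      have hc3 : 0 < (s ^ ((1:ℝ)/3)) ^ 3 := pow_pos hc0 3
      have hd0 : (0:ℝ) < 1 + 2 * (s ^ ((1:ℝ)/3)) ^ 3 := by linarith
      have h4 : (4:ℝ) - 4 * (s ^ ((1:ℝ)/3)) ^ 3 ≠ 0 := by intro h; exact h1 (by linarith)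
      show (((-12) * (s ^ ((1:ℝ)/3)) ^ 2) * ((s ^ ((1:ℝ)/3)) * ((s ^ ((1:ℝ)/3)) ^ 3 - 1)) - ((1) + (-4) * (s ^ ((1:ℝ)/3)) ^ 3) * (4 * (s ^ ((1:ℝ)/3)) ^ 3 - 1))
          / ((s ^ ((1:ℝ)/3)) * ((s ^ ((1:ℝ)/3)) ^ 3 - 1)) ^ 2 * (1 / (3 * (s ^ ((1:ℝ)/3)) ^ 2)) / ((4 - 4 * (s ^ ((1:ℝ)/3)) ^ 3) / (3 * (s ^ ((1:ℝ)/3)) * (1 + 2 * (s ^ ((1:ℝ)/3)) ^ 3) ^ 2))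
          = (((-1)/4) + (-2) * (s ^ ((1:ℝ)/3)) ^ 3 + (-6) * (s ^ ((1:ℝ)/3)) ^ 6 + (-8) * (s ^ ((1:ℝ)/3)) ^ 9 + (-4) * (s ^ ((1:ℝ)/3)) ^ 12) / (((s ^ ((1:ℝ)/3)) * ((s ^ ((1:ℝ)/3)) ^ 3 - 1)) ^ 3)
      have hb : (s ^ ((1:ℝ)/3)) * ((s ^ ((1:ℝ)/3)) ^ 3 - 1) ≠ 0 := mul_ne_zero hc0.ne' h1
      have h1' : (1:ℝ) - (s ^ ((1:ℝ)/3)) ^ 3 ≠ 0 := by intro h; exact h1 (by linarith)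
      field_simp
      ring
  have h3 : ∀ s ∈ U, iteratedDeriv 3 H (φ s) = (((3)/16) + ((-45)/4) * (s ^ ((1:ℝ)/3)) ^ 6 + (-60) * (s ^ ((1:ℝ)/3)) ^ 9 + (-135) * (s ^ ((1:ℝ)/3)) ^ 12 + (-144) * (s ^ ((1:ℝ)/3)) ^ 15 + (-60) * (s ^ ((1:ℝ)/3)) ^ 18) / (((s ^ ((1:ℝ)/3)) * ((s ^ ((1:ℝ)/3)) ^ 3 - 1)) ^ 5) := by
    refine nothaux_keystep U hU φ H (fun s : ℝ => (4 - 4 * (s ^ ((1:ℝ)/3)) ^ 3) / (3 * (s ^ ((1:ℝ)/3)) * (1 + 2 * (s ^ ((1:ℝ)/3)) ^ 3) ^ 2))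
      (fun x : ℝ => ((-1)/4) + (-2) * x ^ 3 + (-6) * x ^ 6 + (-8) * x ^ 9 + (-4) * x ^ 12) (fun x : ℝ => (x * (x ^ 3 - 1)) ^ 3)
      (fun x : ℝ => (-6) * x ^ 2 + (-36) * x ^ 5 + (-72) * x ^ 8 + (-48) * x ^ 11) (fun x : ℝ => (3) * (x * (x ^ 3 - 1)) ^ 2 * (4 * x ^ 3 - 1))
      (fun x : ℝ => ((3)/16) + ((-45)/4) * x ^ 6 + (-60) * x ^ 9 + (-135) * x ^ 12 + (-144) * x ^ 15 + (-60) * x ^ 18) (fun x : ℝ => (x * (x ^ 3 - 1)) ^ 5)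
      2 hrtU hφd hΦne (fun s hs => hdiff 2 (by norm_num) (φ s) (hVU ⟨s, hs, rfl⟩)) h2 ?_ ?_ ?_ ?_
    · intro c
      have h := (((((hasDerivAt_const c (((-1)/4) : ℝ)).add ((hasDerivAt_pow 3 c).const_mul ((-2) : ℝ))).add ((hasDerivAt_pow 6 c).const_mul ((-6) : ℝ))).add ((hasDerivAt_pow 9 c).const_mul ((-8) : ℝ))).add ((hasDerivAt_pow 12 c).const_mul ((-4) : ℝ)))
      refine h.congr_deriv ?_
      push_cast
      ring
    · intro c
      have h := (((hasDerivAt_id' (𝕜 := ℝ) c).mul ((hasDerivAt_pow 3 c).sub_const 1)).pow 3)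
      refine h.congr_deriv ?_
      simp only [Pi.mul_apply]
      push_cast
      ring
    · intro s hs
      have hc0 : 0 < s ^ ((1:ℝ)/3) := Real.rpow_pos_of_pos (hUpos hs) _
      show (((s ^ ((1:ℝ)/3)) * ((s ^ ((1:ℝ)/3)) ^ 3 - 1)) ^ 3) ≠ 0
      exact pow_ne_zero _ (mul_ne_zero hc0.ne' (hcube s hs))
    · intro s hs
      have hc0 : 0 < s ^ ((1:ℝ)/3) := Real.rpow_pos_of_pos (hUpos hs) _
      have h1 := hcube s hs
      have hc3 : 0 < (s ^ ((1:ℝ)/3)) ^ 3 := pow_pos hc0 3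
      have hd0 : (0:ℝ) < 1 + 2 * (s ^ ((1:ℝ)/3)) ^ 3 := by linarith
      have h4 : (4:ℝ) - 4 * (s ^ ((1:ℝ)/3)) ^ 3 ≠ 0 := by intro h; exact h1 (by linarith)
      show (((-6) * (s ^ ((1:ℝ)/3)) ^ 2 + (-36) * (s ^ ((1:ℝ)/3)) ^ 5 + (-72) * (s ^ ((1:ℝ)/3)) ^ 8 + (-48) * (s ^ ((1:ℝ)/3)) ^ 11) * (((s ^ ((1:ℝ)/3)) * ((s ^ ((1:ℝ)/3)) ^ 3 - 1)) ^ 3) - (((-1)/4) + (-2) * (s ^ ((1:ℝ)/3)) ^ 3 + (-6) * (s ^ ((1:ℝ)/3)) ^ 6 + (-8) * (s ^ ((1:ℝ)/3)) ^ 9 + (-4) * (s ^ ((1:ℝ)/3)) ^ 12) * ((3) * ((s ^ ((1:ℝ)/3)) * ((s ^ ((1:ℝ)/3)) ^ 3 - 1)) ^ 2 * (4 * (s ^ ((1:ℝ)/3)) ^ 3 - 1)))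
          / (((s ^ ((1:ℝ)/3)) * ((s ^ ((1:ℝ)/3)) ^ 3 - 1)) ^ 3) ^ 2 * (1 / (3 * (s ^ ((1:ℝ)/3)) ^ 2)) / ((4 - 4 * (s ^ ((1:ℝ)/3)) ^ 3) / (3 * (s ^ ((1:ℝ)/3)) * (1 + 2 * (s ^ ((1:ℝ)/3)) ^ 3) ^ 2))
          = (((3)/16) + ((-45)/4) * (s ^ ((1:ℝ)/3)) ^ 6 + (-60) * (s ^ ((1:ℝ)/3)) ^ 9 + (-135) * (s ^ ((1:ℝ)/3)) ^ 12 + (-144) * (s ^ ((1:ℝ)/3)) ^ 15 + (-60) * (s ^ ((1:ℝ)/3)) ^ 18) / (((s ^ ((1:ℝ)/3)) * ((s ^ ((1:ℝ)/3)) ^ 3 - 1)) ^ 5)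
      have hb : (s ^ ((1:ℝ)/3)) * ((s ^ ((1:ℝ)/3)) ^ 3 - 1) ≠ 0 := mul_ne_zero hc0.ne' h1
      have h1' : (1:ℝ) - (s ^ ((1:ℝ)/3)) ^ 3 ≠ 0 := by intro h; exact h1 (by linarith)
      field_simp
      ring
  have h4 : ∀ s ∈ U, iteratedDeriv 4 H (φ s) = (((-15)/64) + ((-855)/8) * (s ^ ((1:ℝ)/3)) ^ 9 + (-810) * (s ^ ((1:ℝ)/3)) ^ 12 + ((-5265)/2) * (s ^ ((1:ℝ)/3)) ^ 15 + (-4500) * (s ^ ((1:ℝ)/3)) ^ 18 + (-4050) * (s ^ ((1:ℝ)/3)) ^ 21 + (-1620) * (s ^ ((1:ℝ)/3)) ^ 24 + (-120) * (s ^ ((1:ℝ)/3)) ^ 27) / (((s ^ ((1:ℝ)/3)) * ((s ^ ((1:ℝ)/3)) ^ 3 - 1)) ^ 7) := by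
    refine nothaux_keystep U hU φ H (fun s : ℝ => (4 - 4 * (s ^ ((1:ℝ)/3)) ^ 3) / (3 * (s ^ ((1:ℝ)/3)) * (1 + 2 * (s ^ ((1:ℝ)/3)) ^ 3) ^ 2))
      (fun x : ℝ => ((3)/16) + ((-45)/4) * x ^ 6 + (-60) * x ^ 9 + (-135) * x ^ 12 + (-144) * x ^ 15 + (-60) * x ^ 18) (fun x : ℝ => (x * (x ^ 3 - 1)) ^ 5)
      (fun x : ℝ => ((-135)/2) * x ^ 5 + (-540) * x ^ 8 + (-1620) * x ^ 11 + (-2160) * x ^ 14 + (-1080) * x ^ 17) (fun x : ℝ => (5) * (x * (x ^ 3 - 1)) ^ 4 * (4 * x ^ 3 - 1))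
      (fun x : ℝ => ((-15)/64) + ((-855)/8) * x ^ 9 + (-810) * x ^ 12 + ((-5265)/2) * x ^ 15 + (-4500) * x ^ 18 + (-4050) * x ^ 21 + (-1620) * x ^ 24 + (-120) * x ^ 27) (fun x : ℝ => (x * (x ^ 3 - 1)) ^ 7)
      3 hrtU hφd hΦne (fun s hs => hdiff 3 (by norm_num) (φ s) (hVU ⟨s, hs, rfl⟩)) h3 ?_ ?_ ?_ ?_
    · intro c
      have h := ((((((hasDerivAt_const c (((3)/16) : ℝ)).add ((hasDerivAt_pow 6 c).const_mul (((-45)/4) : ℝ))).add ((hasDerivAt_pow 9 c).const_mul ((-60) : ℝ))).add ((hasDerivAt_pow 12 c).const_mul ((-135) : ℝ))).add ((hasDerivAt_pow 15 c).const_mul ((-144) : ℝ))).add ((hasDerivAt_pow 18 c).const_mul ((-60) : ℝ)))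
      refine h.congr_deriv ?_
      push_cast
      ring
    · intro c
      have h := (((hasDerivAt_id' (𝕜 := ℝ) c).mul ((hasDerivAt_pow 3 c).sub_const 1)).pow 5)
      refine h.congr_deriv ?_
      simp only [Pi.mul_apply]
      push_cast
      ring
    · intro s hs
      have hc0 : 0 < s ^ ((1:ℝ)/3) := Real.rpow_pos_of_pos (hUpos hs) _
      show (((s ^ ((1:ℝ)/3)) * ((s ^ ((1:ℝ)/3)) ^ 3 - 1)) ^ 5) ≠ 0
      exact pow_ne_zero _ (mul_ne_zero hc0.ne' (hcube s hs))
    · intro s hs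
      have hc0 : 0 < s ^ ((1:ℝ)/3) := Real.rpow_pos_of_pos (hUpos hs) _
      have h1 := hcube s hs
      have hc3 : 0 < (s ^ ((1:ℝ)/3)) ^ 3 := pow_pos hc0 3
      have hd0 : (0:ℝ) < 1 + 2 * (s ^ ((1:ℝ)/3)) ^ 3 := by linarith
      have h4 : (4:ℝ) - 4 * (s ^ ((1:ℝ)/3)) ^ 3 ≠ 0 := by intro h; exact h1 (by linarith)
      show ((((-135)/2) * (s ^ ((1:ℝ)/3)) ^ 5 + (-540) * (s ^ ((1:ℝ)/3)) ^ 8 + (-1620) * (s ^ ((1:ℝ)/3)) ^ 11 + (-2160) * (s ^ ((1:ℝ)/3)) ^ 14 + (-1080) * (s ^ ((1:ℝ)/3)) ^ 17) * (((s ^ ((1:ℝ)/3)) * ((s ^ ((1:ℝ)/3)) ^ 3 - 1)) ^ 5) - (((3)/16) + ((-45)/4) * (s ^ ((1:ℝ)/3)) ^ 6 + (-60) * (s ^ ((1:ℝ)/3)) ^ 9 + (-135) * (s ^ ((1:ℝ)/3)) ^ 12 + (-144) * (s ^ ((1:ℝ)/3)) ^ 15 + (-60) * (s ^ ((1:ℝ)/3))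 ^ 18) * ((5) * ((s ^ ((1:ℝ)/3)) * ((s ^ ((1:ℝ)/3)) ^ 3 - 1)) ^ 4 * (4 * (s ^ ((1:ℝ)/3)) ^ 3 - 1)))
          / (((s ^ ((1:ℝ)/3)) * ((s ^ ((1:ℝ)/3)) ^ 3 - 1)) ^ 5) ^ 2 * (1 / (3 * (s ^ ((1:ℝ)/3)) ^ 2)) / ((4 - 4 * (s ^ ((1:ℝ)/3)) ^ 3) / (3 * (s ^ ((1:ℝ)/3)) * (1 + 2 * (s ^ ((1:ℝ)/3)) ^ 3) ^ 2))
          = (((-15)/64) + ((-855)/8) * (s ^ ((1:ℝ)/3)) ^ 9 + (-810) * (s ^ ((1:ℝ)/3)) ^ 12 + ((-5265)/2) * (s ^ ((1:ℝ)/3)) ^ 15 + (-4500) * (s ^ ((1:ℝ)/3)) ^ 18 + (-4050) * (s ^ ((1:ℝ)/3)) ^ 21 + (-1620) * (s ^ ((1:ℝ)/3)) ^ 24 + (-120) * (s ^ ((1:ℝ)/3)) ^ 27) / (((s ^ ((1:ℝ)/3)) * ((s ^ ((1:ℝ)/3)) ^ 3 - 1)) ^ 7)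
      have hb : (s ^ ((1:ℝ)/3)) * ((s ^ ((1:ℝ)/3)) ^ 3 - 1) ≠ 0 := mul_ne_zero hc0.ne' h1
      have h1' : (1:ℝ) - (s ^ ((1:ℝ)/3)) ^ 3 ≠ 0 := by intro h; exact h1 (by linarith)
      field_simp
      ring
  have h5 : ∀ s ∈ U, iteratedDeriv 5 H (φ s) = (((105)/256) + ((-315)/64) * (s ^ ((1:ℝ)/3)) ^ 6 + (-60) * (s ^ ((1:ℝ)/3)) ^ 9 + ((-55485)/32) * (s ^ ((1:ℝ)/3)) ^ 12 + ((-118395)/8) * (s ^ ((1:ℝ)/3)) ^ 15 + ((-244125)/4) * (s ^ ((1:ℝ)/3)) ^ 18 + ((-286335)/2) * (s ^ ((1:ℝ)/3)) ^ 21 + (-199395) * (s ^ ((1:ℝ)/3)) ^ 24 + (-159810) * (s ^ ((1:ℝ)/3)) ^ 27 + (-64800) * (s ^ ((1:ℝ)/3)) ^ 30 + (-9000) * (s ^ ((1:ℝ)/3)) ^ 33 + (-120) * (s ^ ((1:ℝ)/3)) ^ 36) / (((s ^ ((1:ℝ)/3)) * ((s ^ ((1:ℝ)/3)) ^ 3 -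 1)) ^ 9) := by
    refine nothaux_keystep U hU φ H (fun s : ℝ => (4 - 4 * (s ^ ((1:ℝ)/3)) ^ 3) / (3 * (s ^ ((1:ℝ)/3)) * (1 + 2 * (s ^ ((1:ℝ)/3)) ^ 3) ^ 2))
      (fun x : ℝ => ((-15)/64) + ((-855)/8) * x ^ 9 + (-810) * x ^ 12 + ((-5265)/2) * x ^ 15 + (-4500) * x ^ 18 + (-4050) * x ^ 21 + (-1620) * x ^ 24 + (-120) * x ^ 27) (fun x : ℝ => (x * (x ^ 3 - 1)) ^ 7)
      (fun x : ℝ => ((-7695)/8) * x ^ 8 + (-9720) * x ^ 11 + ((-78975)/2) * x ^ 14 + (-81000) * x ^ 17 + (-85050) * x ^ 20 + (-38880) * x ^ 23 + (-3240) * x ^ 26) (fun x : ℝ => (7) * (x * (x ^ 3 - 1)) ^ 6 * (4 * x ^ 3 - 1))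
      (fun x : ℝ => ((105)/256) + ((-315)/64) * x ^ 6 + (-60) * x ^ 9 + ((-55485)/32) * x ^ 12 + ((-118395)/8) * x ^ 15 + ((-244125)/4) * x ^ 18 + ((-286335)/2) * x ^ 21 + (-199395) * x ^ 24 + (-159810) * x ^ 27 + (-64800) * x ^ 30 + (-9000) * x ^ 33 + (-120) * x ^ 36) (fun x : ℝ => (x * (x ^ 3 - 1)) ^ 9)
      4 hrtU hφd hΦne (fun s hs => hdiff 4 (by norm_num) (φ s) (hVU ⟨s, hs, rfl⟩)) h4 ?_ ?_ ?_ ?_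
    · intro c
      have h := ((((((((hasDerivAt_const c (((-15)/64) : ℝ)).add ((hasDerivAt_pow 9 c).const_mul (((-855)/8) : ℝ))).add ((hasDerivAt_pow 12 c).const_mul ((-810) : ℝ))).add ((hasDerivAt_pow 15 c).const_mul (((-5265)/2) : ℝ))).add ((hasDerivAt_pow 18 c).const_mul ((-4500) : ℝ))).add ((hasDerivAt_pow 21 c).const_mul ((-4050) : ℝ))).add ((hasDerivAt_pow 24 c).const_mul ((-1620) : ℝ))).add ((hasDerivAt_pow 27 c).const_mul ((-120) : ℝ)))
      refine h.congr_deriv ?_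
      push_cast
      ring
    · intro c
      have h := (((hasDerivAt_id' (𝕜 := ℝ) c).mul ((hasDerivAt_pow 3 c).sub_const 1)).pow 7)
      refine h.congr_deriv ?_
      simp only [Pi.mul_apply]
      push_cast
      ring
    · intro s hs
      have hc0 : 0 < s ^ ((1:ℝ)/3) := Real.rpow_pos_of_pos (hUpos hs) _
      show (((s ^ ((1:ℝ)/3)) * ((s ^ ((1:ℝ)/3)) ^ 3 - 1)) ^ 7) ≠ 0
      exact pow_ne_zero _ (mul_ne_zero hc0.ne' (hcube s hs))
    · intro s hs
      have hc0 : 0 < s ^ ((1:ℝ)/3) := Real.rpow_pos_of_pos (hUpos hs) _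
      have h1 := hcube s hs
      have hc3 : 0 < (s ^ ((1:ℝ)/3)) ^ 3 := pow_pos hc0 3
      have hd0 : (0:ℝ) < 1 + 2 * (s ^ ((1:ℝ)/3)) ^ 3 := by linarith
      have h4 : (4:ℝ) - 4 * (s ^ ((1:ℝ)/3)) ^ 3 ≠ 0 := by intro h; exact h1 (by linarith)
      show ((((-7695)/8) * (s ^ ((1:ℝ)/3)) ^ 8 + (-9720) * (s ^ ((1:ℝ)/3)) ^ 11 + ((-78975)/2) * (s ^ ((1:ℝ)/3)) ^ 14 + (-81000) * (s ^ ((1:ℝ)/3)) ^ 17 + (-85050) * (s ^ ((1:ℝ)/3)) ^ 20 + (-38880) * (s ^ ((1:ℝ)/3)) ^ 23 + (-3240) * (s ^ ((1:ℝ)/3)) ^ 26) * (((s ^ ((1:ℝ)/3)) * ((s ^ ((1:ℝ)/3)) ^ 3 - 1)) ^ 7) - (((-15)/64) + ((-855)/8) * (s ^ ((1:ℝ)/3)) ^ 9 + (-810) * (s ^ ((1:ℝ)/3)) ^ 12 + ((-5265)/2) * (s ^ ((1:ℝ)/3)) ^ 15 + (-4500) * (s ^ ((1:ℝ)/3)) ^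 18 + (-4050) * (s ^ ((1:ℝ)/3)) ^ 21 + (-1620) * (s ^ ((1:ℝ)/3)) ^ 24 + (-120) * (s ^ ((1:ℝ)/3)) ^ 27) * ((7) * ((s ^ ((1:ℝ)/3)) * ((s ^ ((1:ℝ)/3)) ^ 3 - 1)) ^ 6 * (4 * (s ^ ((1:ℝ)/3)) ^ 3 - 1)))
          / (((s ^ ((1:ℝ)/3)) * ((s ^ ((1:ℝ)/3)) ^ 3 - 1)) ^ 7) ^ 2 * (1 / (3 * (s ^ ((1:ℝ)/3)) ^ 2)) / ((4 - 4 * (s ^ ((1:ℝ)/3)) ^ 3) / (3 * (s ^ ((1:ℝ)/3)) * (1 + 2 * (s ^ ((1:ℝ)/3)) ^ 3) ^ 2))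
          = (((105)/256) + ((-315)/64) * (s ^ ((1:ℝ)/3)) ^ 6 + (-60) * (s ^ ((1:ℝ)/3)) ^ 9 + ((-55485)/32) * (s ^ ((1:ℝ)/3)) ^ 12 + ((-118395)/8) * (s ^ ((1:ℝ)/3)) ^ 15 + ((-244125)/4) * (s ^ ((1:ℝ)/3)) ^ 18 + ((-286335)/2) * (s ^ ((1:ℝ)/3)) ^ 21 + (-199395) * (s ^ ((1:ℝ)/3)) ^ 24 + (-159810) * (s ^ ((1:ℝ)/3)) ^ 27 + (-64800) * (s ^ ((1:ℝ)/3)) ^ 30 + (-9000) * (s ^ ((1:ℝ)/3)) ^ 33 + (-120) * (s ^ ((1:ℝ)/3)) ^ 36) / (((s ^ ((1:ℝ)/3)) * ((s ^ ((1:ℝ)/3)) ^ 3 - 1)) ^ 9)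
      have hb : (s ^ ((1:ℝ)/3)) * ((s ^ ((1:ℝ)/3)) ^ 3 - 1) ≠ 0 := mul_ne_zero hc0.ne' h1
      have h1' : (1:ℝ) - (s ^ ((1:ℝ)/3)) ^ 3 ≠ 0 := by intro h; exact h1 (by linarith)
      field_simp
      ring
  have h6 : ∀ s ∈ U, iteratedDeriv 6 H (φ s) = (((-945)/1024) + ((945)/64) * (s ^ ((1:ℝ)/3)) ^ 6 + ((-945)/128) * (s ^ ((1:ℝ)/3)) ^ 9 + ((-235305)/128) * (s ^ ((1:ℝ)/3)) ^ 12 + ((-316575)/8) * (s ^ ((1:ℝ)/3)) ^ 15 + ((-1408995)/4) * (s ^ ((1:ℝ)/3)) ^ 18 + ((-6778485)/4) * (s ^ ((1:ℝ)/3)) ^ 21 + (-4961250) * (s ^ ((1:ℝ)/3)) ^ 24 + (-9272340) * (s ^ ((1:ℝ)/3)) ^ 27 + (-11107530) * (s ^ ((1:ℝ)/3)) ^ 30 + (-8219610) * (s ^ ((1:ℝ)/3)) ^ 33 + (-3411450) * (s ^ ((1:ℝ)/3)) ^ 36 + (-635040) * (s ^ ((1:ℝ)/3)) ^ 39 + (-30240)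 * (s ^ ((1:ℝ)/3)) ^ 42) / (((s ^ ((1:ℝ)/3)) * ((s ^ ((1:ℝ)/3)) ^ 3 - 1)) ^ 11) := by
    refine nothaux_keystep U hU φ H (fun s : ℝ => (4 - 4 * (s ^ ((1:ℝ)/3)) ^ 3) / (3 * (s ^ ((1:ℝ)/3)) * (1 + 2 * (s ^ ((1:ℝ)/3)) ^ 3) ^ 2))
      (fun x : ℝ => ((105)/256) + ((-315)/64) * x ^ 6 + (-60) * x ^ 9 + ((-55485)/32) * x ^ 12 + ((-118395)/8) * x ^ 15 + ((-244125)/4) * x ^ 18 + ((-286335)/2) * x ^ 21 + (-199395) * x ^ 24 + (-159810) * x ^ 27 + (-64800) * x ^ 30 + (-9000) * x ^ 33 + (-120) * x ^ 36) (fun x : ℝ => (x * (x ^ 3 - 1)) ^ 9)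
      (fun x : ℝ => ((-945)/32) * x ^ 5 + (-540) * x ^ 8 + ((-166455)/8) * x ^ 11 + ((-1775925)/8) * x ^ 14 + ((-2197125)/2) * x ^ 17 + ((-6013035)/2) * x ^ 20 + (-4785480) * x ^ 23 + (-4314870) * x ^ 26 + (-1944000) * x ^ 29 + (-297000) * x ^ 32 + (-4320) * x ^ 35) (fun x : ℝ => (9) * (x * (x ^ 3 - 1)) ^ 8 * (4 * x ^ 3 - 1))
      (fun x : ℝ => ((-945)/1024) + ((945)/64) * x ^ 6 + ((-945)/128) * x ^ 9 + ((-235305)/128) * x ^ 12 + ((-316575)/8) * x ^ 15 + ((-1408995)/4) * x ^ 18 + ((-6778485)/4) * x ^ 21 + (-4961250) * x ^ 24 + (-9272340) * x ^ 27 + (-11107530) * x ^ 30 + (-8219610) * x ^ 33 + (-3411450) * x ^ 36 + (-635040) * x ^ 39 + (-30240) * x ^ 42) (fun x : ℝ => (x * (x ^ 3 - 1)) ^ 11)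
      5 hrtU hφd hΦne (fun s hs => hdiff 5 (by norm_num) (φ s) (hVU ⟨s, hs, rfl⟩)) h5 ?_ ?_ ?_ ?_
    · intro c
      have h := ((((((((((((hasDerivAt_const c (((105)/256) : ℝ)).add ((hasDerivAt_pow 6 c).const_mul (((-315)/64) : ℝ))).add ((hasDerivAt_pow 9 c).const_mul ((-60) : ℝ))).add ((hasDerivAt_pow 12 c).const_mul (((-55485)/32) : ℝ))).add ((hasDerivAt_pow 15 c).const_mul (((-118395)/8) : ℝ))).add ((hasDerivAt_pow 18 c).const_mul (((-244125)/4) : ℝ))).add ((hasDerivAt_pow 21 c).const_mul (((-286335)/2) : ℝ))).add ((hasDerivAt_pow 24 c).const_mul ((-199395) : ℝ))).add ((hasDerivAt_pow 27 c).const_mul ((-159810) : ℝ))).add ((hasDerivAt_pow 30 c).const_mul ((-64800) : ℝ))).add ((hasDerivAt_pow 33 c).const_mul ((-9000) : ℝ))).add ((hasDerivAt_pow 36 c).const_mul ((-120) : ℝ)))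
      refine h.congr_deriv ?_
      push_cast
      ring
    · intro c
      have h := (((hasDerivAt_id' (𝕜 := ℝ) c).mul ((hasDerivAt_pow 3 c).sub_const 1)).pow 9)
      refine h.congr_deriv ?_
      simp only [Pi.mul_apply]
      push_cast
      ring
    · intro s hs
      have hc0 : 0 < s ^ ((1:ℝ)/3) := Real.rpow_pos_of_pos (hUpos hs) _
      show (((s ^ ((1:ℝ)/3)) * ((s ^ ((1:ℝ)/3)) ^ 3 - 1)) ^ 9) ≠ 0
      exact pow_ne_zero _ (mul_ne_zero hc0.ne' (hcube s hs))
    · intro s hs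
      have hc0 : 0 < s ^ ((1:ℝ)/3) := Real.rpow_pos_of_pos (hUpos hs) _
      have h1 := hcube s hs
      have hc3 : 0 < (s ^ ((1:ℝ)/3)) ^ 3 := pow_pos hc0 3
      have hd0 : (0:ℝ) < 1 + 2 * (s ^ ((1:ℝ)/3)) ^ 3 := by linarith
      have h4 : (4:ℝ) - 4 * (s ^ ((1:ℝ)/3)) ^ 3 ≠ 0 := by intro h; exact h1 (by linarith)
      show ((((-945)/32) * (s ^ ((1:ℝ)/3)) ^ 5 + (-540) * (s ^ ((1:ℝ)/3)) ^ 8 + ((-166455)/8) * (s ^ ((1:ℝ)/3)) ^ 11 + ((-1775925)/8) * (s ^ ((1:ℝ)/3)) ^ 14 + ((-2197125)/2) * (s ^ ((1:ℝ)/3)) ^ 17 + ((-6013035)/2) * (s ^ ((1:ℝ)/3)) ^ 20 + (-4785480) * (s ^ ((1:ℝ)/3)) ^ 23 + (-4314870) * (s ^ ((1:ℝ)/3)) ^ 26 + (-1944000) * (s ^ ((1:ℝ)/3)) ^ 29 + (-297000) * (s ^ ((1:ℝ)/3)) ^ 32 + (-4320) * (s ^ ((1:ℝ)/3)) ^ 35)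 * (((s ^ ((1:ℝ)/3)) * ((s ^ ((1:ℝ)/3)) ^ 3 - 1)) ^ 9) - (((105)/256) + ((-315)/64) * (s ^ ((1:ℝ)/3)) ^ 6 + (-60) * (s ^ ((1:ℝ)/3)) ^ 9 + ((-55485)/32) * (s ^ ((1:ℝ)/3)) ^ 12 + ((-118395)/8) * (s ^ ((1:ℝ)/3)) ^ 15 + ((-244125)/4) * (s ^ ((1:ℝ)/3)) ^ 18 + ((-286335)/2) * (s ^ ((1:ℝ)/3)) ^ 21 + (-199395) * (s ^ ((1:ℝ)/3)) ^ 24 + (-159810) * (s ^ ((1:ℝ)/3)) ^ 27 + (-64800) * (s ^ ((1:ℝ)/3)) ^ 30 + (-9000) * (s ^ ((1:ℝ)/3)) ^ 33 + (-120) * (s ^ ((1:ℝ)/3)) ^ 36) * ((9) * ((s ^ ((1:ℝ)/3)) * ((s ^ ((1:ℝ)/3)) ^ 3 - 1)) ^ 8 * (4 * (s ^ ((1:ℝ)/3)) ^ 3 - 1)))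
          / (((s ^ ((1:ℝ)/3)) * ((s ^ ((1:ℝ)/3)) ^ 3 - 1)) ^ 9) ^ 2 * (1 / (3 * (s ^ ((1:ℝ)/3)) ^ 2)) / ((4 - 4 * (s ^ ((1:ℝ)/3)) ^ 3) / (3 * (s ^ ((1:ℝ)/3)) * (1 + 2 * (s ^ ((1:ℝ)/3)) ^ 3) ^ 2))
          = (((-945)/1024) + ((945)/64) * (s ^ ((1:ℝ)/3)) ^ 6 + ((-945)/128) * (s ^ ((1:ℝ)/3)) ^ 9 + ((-235305)/128) * (s ^ ((1:ℝ)/3)) ^ 12 + ((-316575)/8) * (s ^ ((1:ℝ)/3)) ^ 15 + ((-1408995)/4) * (s ^ ((1:ℝ)/3)) ^ 18 + ((-6778485)/4) * (s ^ ((1:ℝ)/3)) ^ 21 + (-4961250) * (s ^ ((1:ℝ)/3)) ^ 24 + (-9272340) * (s ^ ((1:ℝ)/3)) ^ 27 + (-11107530) * (s ^ ((1:ℝ)/3)) ^ 30 + (-8219610) * (s ^ ((1:ℝ)/3)) ^ 33 + (-3411450) * (s ^ ((1:ℝ)/3)) ^ 36 + (-635040) * (s ^ ((1:ℝ)/3))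 ^ 39 + (-30240) * (s ^ ((1:ℝ)/3)) ^ 42) / (((s ^ ((1:ℝ)/3)) * ((s ^ ((1:ℝ)/3)) ^ 3 - 1)) ^ 11)
      have hb : (s ^ ((1:ℝ)/3)) * ((s ^ ((1:ℝ)/3)) ^ 3 - 1) ≠ 0 := mul_ne_zero hc0.ne' h1
      have h1' : (1:ℝ) - (s ^ ((1:ℝ)/3)) ^ 3 ≠ 0 := by intro h; exact h1 (by linarith)
      field_simp
      ring
  intro t ht
  obtain ⟨s, hs, rfl⟩ := ht
  have hc0 : 0 < s ^ ((1:ℝ)/3) := Real.rpow_pos_of_pos (hUpos hs) _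
  have h1 := hcube s hs
  have hb : (s ^ ((1:ℝ)/3)) * ((s ^ ((1:ℝ)/3)) ^ 3 - 1) ≠ 0 := mul_ne_zero hc0.ne' h1
  have m2 : iteratedDeriv 2 H (φ s) * ((s ^ ((1:ℝ)/3)) * ((s ^ ((1:ℝ)/3)) ^ 3 - 1)) ^ 3 = (((-1)/4) + (-2) * (s ^ ((1:ℝ)/3)) ^ 3 + (-6) * (s ^ ((1:ℝ)/3)) ^ 6 + (-8) * (s ^ ((1:ℝ)/3)) ^ 9 + (-4) * (s ^ ((1:ℝ)/3)) ^ 12) := by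
    rw [h2 s hs]; exact div_mul_cancel₀ _ (pow_ne_zero _ hb)
  have m3 : iteratedDeriv 3 H (φ s) * ((s ^ ((1:ℝ)/3)) * ((s ^ ((1:ℝ)/3)) ^ 3 - 1)) ^ 5 = (((3)/16) + ((-45)/4) * (s ^ ((1:ℝ)/3)) ^ 6 + (-60) * (s ^ ((1:ℝ)/3)) ^ 9 + (-135) * (s ^ ((1:ℝ)/3)) ^ 12 + (-144) * (s ^ ((1:ℝ)/3)) ^ 15 + (-60) * (s ^ ((1:ℝ)/3)) ^ 18) := by
    rw [h3 s hs]; exact div_mul_cancel₀ _ (pow_ne_zero _ hb)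
  have m4 : iteratedDeriv 4 H (φ s) * ((s ^ ((1:ℝ)/3)) * ((s ^ ((1:ℝ)/3)) ^ 3 - 1)) ^ 7 = (((-15)/64) + ((-855)/8) * (s ^ ((1:ℝ)/3)) ^ 9 + (-810) * (s ^ ((1:ℝ)/3)) ^ 12 + ((-5265)/2) * (s ^ ((1:ℝ)/3)) ^ 15 + (-4500) * (s ^ ((1:ℝ)/3)) ^ 18 + (-4050) * (s ^ ((1:ℝ)/3)) ^ 21 + (-1620) * (s ^ ((1:ℝ)/3)) ^ 24 + (-120) * (s ^ ((1:ℝ)/3)) ^ 27) := by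
    rw [h4 s hs]; exact div_mul_cancel₀ _ (pow_ne_zero _ hb)
  have m5 : iteratedDeriv 5 H (φ s) * ((s ^ ((1:ℝ)/3)) * ((s ^ ((1:ℝ)/3)) ^ 3 - 1)) ^ 9 = (((105)/256) + ((-315)/64) * (s ^ ((1:ℝ)/3)) ^ 6 + (-60) * (s ^ ((1:ℝ)/3)) ^ 9 + ((-55485)/32) * (s ^ ((1:ℝ)/3)) ^ 12 + ((-118395)/8) * (s ^ ((1:ℝ)/3)) ^ 15 + ((-244125)/4) * (s ^ ((1:ℝ)/3)) ^ 18 + ((-286335)/2) * (s ^ ((1:ℝ)/3)) ^ 21 + (-199395) * (s ^ ((1:ℝ)/3)) ^ 24 + (-159810) * (s ^ ((1:ℝ)/3)) ^ 27 + (-64800) * (s ^ ((1:ℝ)/3)) ^ 30 + (-9000) * (s ^ ((1:ℝ)/3)) ^ 33 + (-120) * (s ^ ((1:ℝ)/3)) ^ 36) := by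
    rw [h5 s hs]; exact div_mul_cancel₀ _ (pow_ne_zero _ hb)
  have m6 : iteratedDeriv 6 H (φ s) * ((s ^ ((1:ℝ)/3)) * ((s ^ ((1:ℝ)/3)) ^ 3 - 1)) ^ 11 = (((-945)/1024) + ((945)/64) * (s ^ ((1:ℝ)/3)) ^ 6 + ((-945)/128) * (s ^ ((1:ℝ)/3)) ^ 9 + ((-235305)/128) * (s ^ ((1:ℝ)/3)) ^ 12 + ((-316575)/8) * (s ^ ((1:ℝ)/3)) ^ 15 + ((-1408995)/4) * (s ^ ((1:ℝ)/3)) ^ 18 + ((-6778485)/4) * (s ^ ((1:ℝ)/3)) ^ 21 + (-4961250) * (s ^ ((1:ℝ)/3)) ^ 24 + (-9272340) * (s ^ ((1:ℝ)/3)) ^ 27 + (-11107530) * (s ^ ((1:ℝ)/3)) ^ 30 + (-8219610) * (s ^ ((1:ℝ)/3)) ^ 33 + (-3411450) * (s ^ ((1:ℝ)/3)) ^ 36 + (-635040) * (s ^ ((1:ℝ)/3)) ^ 39 + (-30240) * (s ^ ((1:ℝ)/3)) ^ 42) := by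
    rw [h6 s hs]; exact div_mul_cancel₀ _ (pow_ne_zero _ hb)
  have key : ∀ x : ℝ, 10 * (((-1)/4) + (-2) * x ^ 3 + (-6) * x ^ 6 + (-8) * x ^ 9 + (-4) * x ^ 12) ^ 3 * (((-945)/1024) + ((945)/64) * x ^ 6 + ((-945)/128) * x ^ 9 + ((-235305)/128) * x ^ 12 + ((-316575)/8) * x ^ 15 + ((-1408995)/4) * x ^ 18 + ((-6778485)/4) * x ^ 21 + (-4961250) * x ^ 24 + (-9272340) * x ^ 27 + (-11107530) * x ^ 30 + (-8219610) * x ^ 33 + (-3411450) * x ^ 36 + (-635040) * x ^ 39 + (-30240) * x ^ 42)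
      - 70 * (((-1)/4) + (-2) * x ^ 3 + (-6) * x ^ 6 + (-8) * x ^ 9 + (-4) * x ^ 12) ^ 2 * (((3)/16) + ((-45)/4) * x ^ 6 + (-60) * x ^ 9 + (-135) * x ^ 12 + (-144) * x ^ 15 + (-60) * x ^ 18) * (((105)/256) + ((-315)/64) * x ^ 6 + (-60) * x ^ 9 + ((-55485)/32) * x ^ 12 + ((-118395)/8) * x ^ 15 + ((-244125)/4) * x ^ 18 + ((-286335)/2) * x ^ 21 + (-199395) * x ^ 24 + (-159810) * x ^ 27 + (-64800) * x ^ 30 + (-9000) * x ^ 33 + (-120) * x ^ 36)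
      - 49 * (((-1)/4) + (-2) * x ^ 3 + (-6) * x ^ 6 + (-8) * x ^ 9 + (-4) * x ^ 12) ^ 2 * (((-15)/64) + ((-855)/8) * x ^ 9 + (-810) * x ^ 12 + ((-5265)/2) * x ^ 15 + (-4500) * x ^ 18 + (-4050) * x ^ 21 + (-1620) * x ^ 24 + (-120) * x ^ 27) ^ 2
      + 280 * (((-1)/4) + (-2) * x ^ 3 + (-6) * x ^ 6 + (-8) * x ^ 9 + (-4) * x ^ 12) * (((3)/16) + ((-45)/4) * x ^ 6 + (-60) * x ^ 9 + (-135) * x ^ 12 + (-144) * x ^ 15 + (-60) * x ^ 18) ^ 2 * (((-15)/64) + ((-855)/8) * x ^ 9 + (-810) * x ^ 12 + ((-5265)/2) * x ^ 15 + (-4500) * x ^ 18 + (-4050) * x ^ 21 + (-1620) * x ^ 24 + (-120) * x ^ 27)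
      - 175 * (((3)/16) + ((-45)/4) * x ^ 6 + (-60) * x ^ 9 + (-135) * x ^ 12 + (-144) * x ^ 15 + (-60) * x ^ 18) ^ 4 = 0 := by
    intro x; ring
  unfold NothEqAt
  have hB20 : ((s ^ ((1:ℝ)/3)) * ((s ^ ((1:ℝ)/3)) ^ 3 - 1)) ^ 20 ≠ 0 := pow_ne_zero _ hb
  have hX : (10 * (iteratedDeriv 2 H (φ s)) ^ 3 * iteratedDeriv 6 H (φ s)
      - 70 * (iteratedDeriv 2 H (φ s)) ^ 2 * iteratedDeriv 3 H (φ s) * iteratedDeriv 5 H (φ s)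
      - 49 * (iteratedDeriv 2 H (φ s)) ^ 2 * (iteratedDeriv 4 H (φ s)) ^ 2
      + 280 * iteratedDeriv 2 H (φ s) * (iteratedDeriv 3 H (φ s)) ^ 2 * iteratedDeriv 4 H (φ s)
      - 175 * (iteratedDeriv 3 H (φ s)) ^ 4) * ((s ^ ((1:ℝ)/3)) * ((s ^ ((1:ℝ)/3)) ^ 3 - 1)) ^ 20 = 0 := by
    calc (10 * (iteratedDeriv 2 H (φ s)) ^ 3 * iteratedDeriv 6 H (φ s)
      - 70 * (iteratedDeriv 2 H (φ s)) ^ 2 * iteratedDeriv 3 H (φ s) * iteratedDeriv 5 H (φ s)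
      - 49 * (iteratedDeriv 2 H (φ s)) ^ 2 * (iteratedDeriv 4 H (φ s)) ^ 2
      + 280 * iteratedDeriv 2 H (φ s) * (iteratedDeriv 3 H (φ s)) ^ 2 * iteratedDeriv 4 H (φ s)
      - 175 * (iteratedDeriv 3 H (φ s)) ^ 4) * ((s ^ ((1:ℝ)/3)) * ((s ^ ((1:ℝ)/3)) ^ 3 - 1)) ^ 20
        = 10 * (iteratedDeriv 2 H (φ s) * ((s ^ ((1:ℝ)/3)) * ((s ^ ((1:ℝ)/3)) ^ 3 - 1)) ^ 3) ^ 3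
              * (iteratedDeriv 6 H (φ s) * ((s ^ ((1:ℝ)/3)) * ((s ^ ((1:ℝ)/3)) ^ 3 - 1)) ^ 11)
          - 70 * (iteratedDeriv 2 H (φ s) * ((s ^ ((1:ℝ)/3)) * ((s ^ ((1:ℝ)/3)) ^ 3 - 1)) ^ 3) ^ 2
              * (iteratedDeriv 3 H (φ s) * ((s ^ ((1:ℝ)/3)) * ((s ^ ((1:ℝ)/3)) ^ 3 - 1)) ^ 5)
              * (iteratedDeriv 5 H (φ s) * ((s ^ ((1:ℝ)/3)) * ((s ^ ((1:ℝ)/3)) ^ 3 - 1)) ^ 9)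
          - 49 * (iteratedDeriv 2 H (φ s) * ((s ^ ((1:ℝ)/3)) * ((s ^ ((1:ℝ)/3)) ^ 3 - 1)) ^ 3) ^ 2
              * (iteratedDeriv 4 H (φ s) * ((s ^ ((1:ℝ)/3)) * ((s ^ ((1:ℝ)/3)) ^ 3 - 1)) ^ 7) ^ 2
          + 280 * (iteratedDeriv 2 H (φ s) * ((s ^ ((1:ℝ)/3)) * ((s ^ ((1:ℝ)/3)) ^ 3 - 1)) ^ 3)
              * (iteratedDeriv 3 H (φ s) * ((s ^ ((1:ℝ)/3)) * ((s ^ ((1:ℝ)/3)) ^ 3 - 1)) ^ 5) ^ 2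
              * (iteratedDeriv 4 H (φ s) * ((s ^ ((1:ℝ)/3)) * ((s ^ ((1:ℝ)/3)) ^ 3 - 1)) ^ 7)
          - 175 * (iteratedDeriv 3 H (φ s) * ((s ^ ((1:ℝ)/3)) * ((s ^ ((1:ℝ)/3)) ^ 3 - 1)) ^ 5) ^ 4 := by ring
      _ = 0 := by rw [m2, m3, m4, m5, m6]; exact key (s ^ ((1:ℝ)/3))
  exact (mul_eq_zero.mp hX).resolve_right hB20
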